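/- Let H be a complex Hilbert space, e₁,…,e_m an orthonormal family, x₁,…,xₙ ∈ H, and M_{jk} ≥ 0 real numbers such that ‖xⱼ‖ − Re⟨eₖ,xⱼ⟩ ≤ M_{jk} for all 1 ≤ j ≤ n, 1 ≤ k ≤ m. Then ∑ⱼ‖xⱼ‖ ≤ (1/√m)‖∑ⱼ xⱼ‖ + (1/m)∑ⱼ∑ₖ M_{jk}. -/

import Mathlib

open Finset

theorem stmt13 {H : Type*} [NormedAddCommGroup H] [InnerProductSpace ℂ H]
    (m n : ℕ) (hm : 0 < m) (e : Fin m → H) (he : Orthonormal ℂ e) (x : Fin n → H)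
    (M : Fin n → Fin m → ℝ) (hM : ∀ j k, 0 ≤ M j k)
    (h : ∀ j k, ‖x j‖ - (inner ℂ (e k) (x j) : ℂ).re ≤ M j k) :
    ∑ j, ‖x j‖ ≤ (1 / Real.sqrt m) * ‖∑ j, x j‖ + (1 / m) * ∑ j, ∑ k, M j k := by
  set S := ∑ j, x j with hS
  set E := ∑ k, e k with hE
  have hEE : (inner ℂ E E : ℂ) = m := by
    rw [hE, inner_sum]
    have : ∀ l : Fin m, (inner ℂ (∑ k, e k) (e l) : ℂ) = 1 := by
      intro l
      rw [sum_inner]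
      have hite := orthonormal_iff_ite.mp he
      simp [hite]
    simp [this]
  have hnormE : ‖E‖ = Real.sqrt m := by
    have h2 : (‖E‖ : ℝ) ^ 2 = m := by
      rw [@norm_sq_eq_re_inner ℂ H _ _ _ E, hEE]
      simp
    rw [← h2, Real.sqrt_sq (norm_nonneg _)]
  have hre : (inner ℂ E S : ℂ).re = ∑ k, ∑ j, (inner ℂ (e k) (x j) : ℂ).re := by
    rw [hE, hS, sum_inner]
    rw [Complex.re_sum]
    congr 1
    ext k
    rw [inner_sum, Complex.re_sum]
  have key : (m : ℝ) * ∑ j, ‖x j‖ ≤ Real.sqrt m * ‖S‖ + ∑ j, ∑ k, M j k := by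
    have hsum : ∑ k : Fin m, ∑ j, ‖x j‖ ≤ ∑ k : Fin m, ∑ j, ((inner ℂ (e k) (x j) : ℂ).re + M j k) := by
      apply Finset.sum_le_sum
      intro k _
      apply Finset.sum_le_sum
      intro j _
      linarith [h j k]
    have heq1 : ∑ k : Fin m, ∑ j, ‖x j‖ = (m : ℝ) * ∑ j, ‖x j‖ := by
      simp [Finset.sum_const, Finset.card_univ]
    have heq2 : ∑ k : Fin m, ∑ j, ((inner ℂ (e k) (x j) : ℂ).re + M j k)
        = (inner ℂ E S : ℂ).re + ∑ j, ∑ k, M j k := by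
      simp only [Finset.sum_add_distrib]
      rw [← Finset.sum_add_distrib, Finset.sum_add_distrib, hre, Finset.sum_comm]
      congr 1
      exact Finset.sum_comm
    rw [heq1, heq2] at hsum
    have hcs : (inner ℂ E S : ℂ).re ≤ Real.sqrt m * ‖S‖ := by
      have := re_inner_le_norm (𝕜 := ℂ) E S
      rw [hnormE] at this
      exact this
    linarith
  have hm' : (0:ℝ) < m := by exact_mod_cast hm
  have hms : (0:ℝ) < Real.sqrt m := Real.sqrt_pos.mpr hm'
  have hsq : Real.sqrt m * Real.sqrt m = (m:ℝ) := Real.mul_self_sqrt hm'.le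
  rw [show (1:ℝ) / Real.sqrt m * ‖S‖ + 1 / m * ∑ j, ∑ k, M j k
      = (Real.sqrt m * ‖S‖ + ∑ j, ∑ k, M j k) / m by
    field_simp
    linear_combination (-‖S‖) * hsq]
  rw [le_div_iff₀ hm']
  linarith
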